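/- Suppose √(λ0/λ2) ≤ M and let β* be a minimizer of F over {β ∈ ℝᵖ : ‖β‖∞ ≤ M}. Set r* = y − Xβ*, α* = −r*, and γ*_i = (α*ᵀX_i − 2M·λ2·sign(α*ᵀX_i)) if |β*_i| = M and γ*_i = 0 otherwise. Then h1(α, γ) ≤ h1(α*, γ*) for all α ∈ ℝⁿ and γ ∈ ℝᵖ, and h1(α*, γ*) = F(β*). -/

import Mathlib

/-- The reverse Huber function: `B(t) = |t|` for `|t| ≤ 1` and `B(t) = (t² + 1)/2` otherwise. -/
noncomputable def revHuber (t : ℝ) : ℝ := if |t| ≤ 1 then |t| else (t ^ 2 + 1) / 2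

/-- The penalty `ψ(β; λ0, λ2, M)`. -/
noncomputable def psi (l0 l2 M b : ℝ) : ℝ :=
  if Real.sqrt (l0 / l2) ≤ M then 2 * l0 * revHuber (b * Real.sqrt (l2 / l0))
  else (l0 / M + l2 * M) * |b|

/-- The objective `F(β)` of the reduced perspective relaxation. -/
noncomputable def Fobj (n p : ℕ) (X : Matrix (Fin n) (Fin p) ℝ) (y : Fin n → ℝ)
    (l0 l2 M : ℝ) (β : Fin p → ℝ) : ℝ :=
  (1 / 2) * ∑ j, (y j - ∑ i, X j i * β i) ^ 2 + ∑ i, psi l0 l2 M (β i)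

/-- `v(α, γᵢ) = [ (αᵀXᵢ − γᵢ)²/(4λ2) − λ0 ]₊ + M |γᵢ|` for column `i` of `X`. -/
noncomputable def vdual (n p : ℕ) (X : Matrix (Fin n) (Fin p) ℝ)
    (l0 l2 M : ℝ) (α : Fin n → ℝ) (i : Fin p) (g : ℝ) : ℝ :=
  max (((∑ j, α j * X j i) - g) ^ 2 / (4 * l2) - l0) 0 + M * |g|

/-- The dual objective `h1(α, γ)`. -/
noncomputable def h1 (n p : ℕ) (X : Matrix (Fin n) (Fin p) ℝ) (y : Fin n → ℝ)
    (l0 l2 M : ℝ) (α : Fin n → ℝ) (γ : Fin p → ℝ) : ℝ :=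
  -(1 / 2) * ∑ j, (α j) ^ 2 - ∑ j, α j * y j - ∑ i, vdual n p X l0 l2 M α i (γ i)

section helpers
variable {l0 l2 M : ℝ}


lemma q_eq_l2t (hl0 : 0 < l0) (hl2 : 0 < l2) :
    Real.sqrt (l0 * l2) = l2 * Real.sqrt (l0 / l2) := by
  have h : l2 * Real.sqrt (l0/l2) = Real.sqrt (l2^2 * (l0/l2)) := by
    rw [Real.sqrt_mul (sq_nonneg l2), Real.sqrt_sq hl2.le]
  rw [h]; congr 1; field_simp

lemma l0s_eq_q (hl0 : 0 < l0) (hl2 : 0 < l2) :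
    l0 * Real.sqrt (l2 / l0) = Real.sqrt (l0 * l2) := by
  have h : l0 * Real.sqrt (l2/l0) = Real.sqrt (l0^2 * (l2/l0)) := by
    rw [Real.sqrt_mul (sq_nonneg l0), Real.sqrt_sq hl0.le]
  rw [h]; congr 1; field_simp

lemma ts_eq_one (hl0 : 0 < l0) (hl2 : 0 < l2) :
    Real.sqrt (l0 / l2) * Real.sqrt (l2 / l0) = 1 := by
  rw [← Real.sqrt_mul (by positivity)]
  rw [show l0/l2 * (l2/l0) = 1 by field_simp]
  exact Real.sqrt_one

lemma psi_linear (hl0 : 0 < l0) (hl2 : 0 < l2) (hcase : Real.sqrt (l0/l2) ≤ M)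
    (x : ℝ) (hx : |x| ≤ Real.sqrt (l0/l2)) :
    psi l0 l2 M x = 2 * Real.sqrt (l0*l2) * |x| := by
  have ht : 0 < Real.sqrt (l0/l2) := Real.sqrt_pos.2 (by positivity)
  have hs : 0 < Real.sqrt (l2/l0) := Real.sqrt_pos.2 (by positivity)
  have hts := ts_eq_one hl0 hl2
  have habs : |x * Real.sqrt (l2/l0)| = |x| * Real.sqrt (l2/l0) := by
    rw [abs_mul, abs_of_nonneg hs.le]
  have hcond : |x * Real.sqrt (l2/l0)| ≤ 1 := by
    rw [habs, ← hts]
    exact mul_le_mul_of_nonneg_right hx hs.le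
  unfold psi revHuber
  rw [if_pos hcase, if_pos hcond, habs, ← l0s_eq_q hl0 hl2]
  ring

lemma psi_quadratic (hl0 : 0 < l0) (hl2 : 0 < l2) (hcase : Real.sqrt (l0/l2) ≤ M)
    (x : ℝ) (hx : Real.sqrt (l0/l2) ≤ |x|) :
    psi l0 l2 M x = l2 * x^2 + l0 := by
  have ht : 0 < Real.sqrt (l0/l2) := Real.sqrt_pos.2 (by positivity)
  have hs : 0 < Real.sqrt (l2/l0) := Real.sqrt_pos.2 (by positivity)
  have hts := ts_eq_one hl0 hl2
  have hs2 : Real.sqrt (l2/l0) ^ 2 = l2/l0 := Real.sq_sqrt (by positivity)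
  have habs : |x * Real.sqrt (l2/l0)| = |x| * Real.sqrt (l2/l0) := by
    rw [abs_mul, abs_of_nonneg hs.le]
  unfold psi revHuber
  rw [if_pos hcase]
  by_cases hcond : |x * Real.sqrt (l2/l0)| ≤ 1
  · -- then |x| = sqrt(l0/l2)
    have h1 : |x| * Real.sqrt (l2/l0) ≤ Real.sqrt (l0/l2) * Real.sqrt (l2/l0) :=
      habs ▸ (hts ▸ hcond)
    have hxe : |x| = Real.sqrt (l0/l2) := le_antisymm (le_of_mul_le_mul_right h1 hs) hx
    have hx2 : x^2 = l0/l2 := by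
      rw [← sq_abs, hxe]; exact Real.sq_sqrt (by positivity)
    rw [if_pos hcond, habs, hxe, hts, hx2]
    field_simp
    ring
  · rw [if_neg hcond, mul_pow, hs2]
    field_simp

lemma psi_le_quad (hl0 : 0 < l0) (hl2 : 0 < l2) (hcase : Real.sqrt (l0/l2) ≤ M)
    (x : ℝ) : psi l0 l2 M x ≤ l2 * x^2 + l0 := by
  rcases le_total |x| (Real.sqrt (l0/l2)) with h | h
  · rw [psi_linear hl0 hl2 hcase x h]
    have hq2 : Real.sqrt (l0*l2) ^ 2 = l0*l2 := Real.sq_sqrt (by positivity)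
    have key : 0 ≤ l2 * (l2 * x^2 + l0 - 2 * Real.sqrt (l0*l2) * |x|) := by
      have expand : l2 * (l2 * x^2 + l0 - 2 * Real.sqrt (l0*l2) * |x|)
          = (l2 * |x| - Real.sqrt (l0*l2))^2 := by
        linear_combination (-(l2^2)) * sq_abs x - hq2
      rw [expand]; positivity
    nlinarith [(mul_nonneg_iff_of_pos_left hl2).mp key]
  · rw [psi_quadratic hl0 hl2 hcase x h]

lemma psi_ge_lin (hl0 : 0 < l0) (hl2 : 0 < l2) (hcase : Real.sqrt (l0/l2) ≤ M)
    (x : ℝ) : 2 * Real.sqrt (l0*l2) * |x| ≤ psi l0 l2 M x := by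
  rcases le_total |x| (Real.sqrt (l0/l2)) with h | h
  · rw [psi_linear hl0 hl2 hcase x h]
  · rw [psi_quadratic hl0 hl2 hcase x h]
    have hq2 : Real.sqrt (l0*l2) ^ 2 = l0*l2 := Real.sq_sqrt (by positivity)
    have key : 0 ≤ l2 * (l2 * x^2 + l0 - 2 * Real.sqrt (l0*l2) * |x|) := by
      have expand : l2 * (l2 * x^2 + l0 - 2 * Real.sqrt (l0*l2) * |x|)
          = (l2 * |x| - Real.sqrt (l0*l2))^2 := by
        linear_combination (-(l2^2)) * sq_abs x - hq2
      rw [expand]; positivity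
    nlinarith [(mul_nonneg_iff_of_pos_left hl2).mp key]


lemma limit_le {x c θ0 K : ℝ} (hθ0 : 0 < θ0) (hK : 0 ≤ K)
    (h : ∀ θ : ℝ, 0 < θ → θ ≤ θ0 → x ≤ c + K * θ) : x ≤ c := by
  refine le_of_forall_pos_le_add fun ε hε => ?_
  have hK1 : 0 < K + 1 := by linarith
  have hθpos : 0 < min θ0 (ε / (K + 1)) := lt_min hθ0 (by positivity)
  have h1 := h _ hθpos (min_le_left _ _)
  have h2 : K * min θ0 (ε / (K + 1)) ≤ ε := by
    have hle : min θ0 (ε / (K + 1)) ≤ ε / (K + 1) := min_le_right _ _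
    have := mul_le_mul_of_nonneg_left hle hK
    have hd : K * (ε / (K + 1)) ≤ ε := by
      rw [mul_div_assoc'] at *
      rw [div_le_iff₀ hK1]
      nlinarith
    linarith
  linarith

lemma sign_sq {b : ℝ} (hb : b ≠ 0) : Real.sign b * Real.sign b = 1 := by
  rcases hb.lt_or_gt with h | h
  · rw [Real.sign_of_neg h]; norm_num
  · rw [Real.sign_of_pos h]; norm_num

lemma abs_sign {b : ℝ} (hb : b ≠ 0) : |Real.sign b| = 1 := by
  rcases hb.lt_or_gt with h | h
  · rw [Real.sign_of_neg h]; norm_num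
  · rw [Real.sign_of_pos h]; norm_num

lemma sign_mul_abs' (b : ℝ) : Real.sign b * |b| = b := by
  rcases lt_trichotomy b 0 with h | h | h
  · rw [Real.sign_of_neg h, abs_of_neg h]; ring
  · simp [h]
  · rw [Real.sign_of_pos h, abs_of_pos h]; ring

lemma weak_coord (hl0 : 0 < l0) (hl2 : 0 < l2) (hM : 0 < M)
    (hcase : Real.sqrt (l0/l2) ≤ M) (a g b : ℝ) (hb : |b| ≤ M) :
    -(a*b) - (max ((a-g)^2/(4*l2) - l0) 0 + M* |g|) ≤ psi l0 l2 M b := by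
  set t := Real.sqrt (l0/l2) with htdef
  set q := Real.sqrt (l0*l2) with hqdef
  have htpos : 0 < t := Real.sqrt_pos.2 (by positivity)
  have hqpos : 0 < q := Real.sqrt_pos.2 (by positivity)
  have ht2 : t^2 = l0/l2 := Real.sq_sqrt (by positivity)
  have hq2 : q^2 = l0*l2 := Real.sq_sqrt (by positivity)
  have hqt : q = l2*t := q_eq_l2t hl0 hl2
  set c := |a - g| with hcdef
  have hc0 : 0 ≤ c := abs_nonneg _
  have hc2 : (a-g)^2 = c^2 := (sq_abs _).symm
  have hmax1 : (a-g)^2/(4*l2) - l0 ≤ max ((a-g)^2/(4*l2) - l0) 0 := le_max_left _ _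
  have hmax0 : (0:ℝ) ≤ max ((a-g)^2/(4*l2) - l0) 0 := le_max_right _ _
  have e1 : -((a-g)*b) ≤ c* |b| := by
    calc -((a-g)*b) ≤ |(a-g)*b| := neg_le_abs _
    _ = c * |b| := abs_mul _ _
  have e2 : -(g*b) ≤ M* |g| := by
    have h1 : -(g*b) ≤ |g| * |b| := by
      calc -(g*b) ≤ |g*b| := neg_le_abs _
      _ = |g| * |b| := abs_mul _ _
    nlinarith [abs_nonneg g, hb]
  have key : c* |b| ≤ max ((a-g)^2/(4*l2) - l0) 0 + psi l0 l2 M b := by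
    have hdiv : (a-g)^2/(4*l2)*(4*l2) = (a-g)^2 := div_mul_cancel₀ _ (by positivity)
    rcases le_total |b| t with hBt | hBt
    · rw [psi_linear hl0 hl2 hcase b hBt]
      rcases le_total c (2*q) with hcq | hcq
      · have : c* |b| ≤ 2*q* |b| := mul_le_mul_of_nonneg_right hcq (abs_nonneg b)
        linarith
      · have hprod : 0 ≤ (c - 2*q)*(t - |b|) := mul_nonneg (by linarith) (by linarith)
        have hmul : c* |b| ≤ (a-g)^2/(4*l2) - l0 + 2*q* |b| := by
          have expand2 : 4*l2*((a-g)^2/(4*l2) - l0 + 2*q* |b| - c* |b|)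
              = (c-2*q)^2 + 4*l2*((c-2*q)*(t-|b|)) := by
            linear_combination hdiv + hc2 + 4*hq2 + (4*c - 8*q)*hqt
          have hpos : 0 ≤ 4*l2*((a-g)^2/(4*l2) - l0 + 2*q* |b| - c* |b|) := by
            rw [expand2]
            have := sq_nonneg (c-2*q)
            nlinarith [hprod, hl2]
          have := (mul_nonneg_iff_of_pos_left (by positivity : (0:ℝ) < 4*l2)).mp hpos
          linarith
        linarith
    · rw [psi_quadratic hl0 hl2 hcase b hBt]
      have hmul : c* |b| ≤ (a-g)^2/(4*l2) + l2*b^2 := by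
        have expand2 : 4*l2*((a-g)^2/(4*l2) + l2*b^2 - c* |b|) = (c - 2*l2* |b|)^2 := by
          linear_combination hdiv + hc2 - 4*l2^2*(sq_abs b)
        have hpos : 0 ≤ 4*l2*((a-g)^2/(4*l2) + l2*b^2 - c* |b|) := by
          rw [expand2]; positivity
        have := (mul_nonneg_iff_of_pos_left (by positivity : (0:ℝ) < 4*l2)).mp hpos
        linarith
      linarith
  have expand : -(a*b) = -((a-g)*b) + -(g*b) := by ring
  linarith


set_option maxHeartbeats 2000000 in
lemma eq_coord (hl0 : 0 < l0) (hl2 : 0 < l2) (hM : 0 < M)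
    (hcase : Real.sqrt (l0/l2) ≤ M) (a S b g : ℝ) (hS : 0 ≤ S) (hb : |b| ≤ M)
    (hg : g = if |b| = M then a - 2*M*l2*Real.sign a else 0)
    (hopt : ∀ b', |b'| ≤ M →
      psi l0 l2 M b ≤ psi l0 l2 M b' + a*(b'-b) + S/2*(b'-b)^2) :
    psi l0 l2 M b + a*b + (max ((a-g)^2/(4*l2) - l0) 0 + M* |g|) = 0 := by
  set t := Real.sqrt (l0/l2) with htdef
  set q := Real.sqrt (l0*l2) with hqdef
  have htpos : 0 < t := Real.sqrt_pos.2 (by positivity)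
  have hqpos : 0 < q := Real.sqrt_pos.2 (by positivity)
  have ht2 : t^2 = l0/l2 := Real.sq_sqrt (by positivity)
  have hq2 : q^2 = l0*l2 := Real.sq_sqrt (by positivity)
  have hqt : q = l2*t := q_eq_l2t hl0 hl2
  have hl0t : l0 = l2*t^2 := by rw [ht2]; field_simp
  have hK : (0:ℝ) ≤ l2 + S/2 := by linarith
  by_cases hbM : |b| = M
  · -- boundary case
    rw [if_pos hbM] at hg
    have hψb : psi l0 l2 M b = l2*M^2 + l0 := by
      rw [psi_quadratic hl0 hl2 hcase b (hbM ▸ hcase), ← sq_abs, hbM]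
    have hl0M : l0 ≤ l2*M^2 := by nlinarith [hl0t, mul_self_le_mul_self htpos.le hcase, hl2]
    rcases (abs_eq hM.le).mp hbM with hbeq | hbeq
    · -- b = M
      have key : a ≤ -(2*l2*M) := by
        refine limit_le hM hK ?_
        intro θ hθ hθM
        have hfeas : |M - θ| ≤ M := by rw [abs_of_nonneg (by linarith)]; linarith
        have h := hopt (M - θ) hfeas
        have hub := psi_le_quad hl0 hl2 hcase (M - θ)
        rw [hψb, hbeq] at h
        have hmul : a*θ ≤ (-(2*l2*M) + (l2 + S/2)*θ)*θ := by nlinarith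
        exact (mul_le_mul_iff_of_pos_right hθ).mp hmul
      have ha : a < 0 := by nlinarith
      rw [Real.sign_of_neg ha] at hg
      have hgv : g = a + 2*M*l2 := by rw [hg]; ring
      have hgabs : |g| = -(a + 2*M*l2) := by rw [hgv, abs_of_nonpos (by linarith)]
      have hag : a - g = -(2*M*l2) := by rw [hgv]; ring
      have hdiv : (a-g)^2/(4*l2) = l2*M^2 := by rw [hag]; field_simp; ring
      rw [hψb, hdiv, hgabs, hbeq, max_eq_left (by linarith)]
      ring
    · -- b = -M
      have key : -a ≤ -(2*l2*M) := by
        refine limit_le hM hK ?_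
        intro θ hθ hθM
        have hfeas : |-M + θ| ≤ M := by rw [abs_of_nonpos (by linarith)]; linarith
        have h := hopt (-M + θ) hfeas
        have hub := psi_le_quad hl0 hl2 hcase (-M + θ)
        rw [hψb, hbeq] at h
        have hmul : (-a)*θ ≤ (-(2*l2*M) + (l2 + S/2)*θ)*θ := by nlinarith
        exact (mul_le_mul_iff_of_pos_right hθ).mp hmul
      have ha : 0 < a := by nlinarith
      rw [Real.sign_of_pos ha] at hg
      have hgv : g = a - 2*M*l2 := by rw [hg]; ring
      have hgabs : |g| = a - 2*M*l2 := by rw [hgv, abs_of_nonneg (by linarith)]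
      have hag : a - g = 2*M*l2 := by rw [hgv]; ring
      have hdiv : (a-g)^2/(4*l2) = l2*M^2 := by rw [hag]; field_simp; ring
      rw [hψb, hdiv, hgabs, hbeq, max_eq_left (by linarith)]
      ring
  · -- interior case : |b| < M
    have hbM' : |b| < M := lt_of_le_of_ne hb hbM
    rw [if_neg hbM] at hg
    rw [hg]
    simp only [sub_zero, abs_zero, mul_zero, add_zero]
    by_cases hb0 : b = 0
    · -- b = 0
      have hψ0 : psi l0 l2 M b = 0 := by
        rw [hb0, psi_linear hl0 hl2 hcase 0 (by simp [htpos.le]), abs_zero]; ring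
      have habs : |a| ≤ 2*q := by
        rcases eq_or_ne a 0 with ha0 | ha0
        · rw [ha0]; simp; positivity
        · refine limit_le htpos (by linarith : (0:ℝ) ≤ S/2) ?_
          intro θ hθ hθt
          set σ := Real.sign a with hσdef
          have hσ2 : σ*σ = 1 := sign_sq ha0
          have hσabs : |σ| = 1 := abs_sign ha0
          have haσ : σ* |a| = a := sign_mul_abs' a
          have habsb' : |(-(θ*σ))| = θ := by
            rw [abs_neg, abs_mul, hσabs, mul_one, abs_of_pos hθ]
          have hfeas : |(-(θ*σ))| ≤ M := by rw [habsb']; linarith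
          have h := hopt (-(θ*σ)) hfeas
          have hψb' : psi l0 l2 M (-(θ*σ)) = 2*q*θ := by
            rw [psi_linear hl0 hl2 hcase _ (by rw [habsb']; linarith), habsb']
          rw [hψb', hψ0, hb0] at h
          have e1 : a * (-(θ*σ) - 0) = -(|a| * θ) := by linear_combination (θ*σ)*haσ - (|a| * θ)*hσ2
          have e2 : S/2 * (-(θ*σ) - 0)^2 = S/2*θ^2 := by linear_combination (S/2*θ^2)*hσ2
          rw [e1, e2] at h
          have hmul : |a| * θ ≤ (2*q + S/2*θ)*θ := by nlinarith [h]
          exact (mul_le_mul_iff_of_pos_right hθ).mp hmul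
      have hmax : max (a^2/(4*l2) - l0) 0 = 0 := by
        apply max_eq_right
        have : a^2 ≤ 4*(l0*l2) := by nlinarith [sq_abs a, hq2, abs_nonneg a]
        rw [sub_nonpos, div_le_iff₀ (by positivity)]
        nlinarith
      rw [hψ0, hmax, hb0]; ring
    · -- b ≠ 0
      set σ := Real.sign b with hσdef
      have hσ2 : σ*σ = 1 := sign_sq hb0
      have hσabs : |σ| = 1 := abs_sign hb0
      have hbσ : σ * |b| = b := sign_mul_abs' b
      have hBpos : 0 < |b| := abs_pos.2 hb0
      rcases lt_or_ge |b| t with hBt | hBt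
      · -- |b| < t : linear region, a = -2qσ
        have hψb : psi l0 l2 M b = 2*q* |b| := psi_linear hl0 hl2 hcase b hBt.le
        have Dminus : a*σ ≤ -(2*q) := by
          refine limit_le hBpos (by linarith : (0:ℝ) ≤ S/2) ?_
          intro θ hθ hθ0
          set b' := σ*(|b| - θ) with hb'def
          have hb'abs : |b'| = |b| - θ := by
            rw [hb'def, abs_mul, hσabs, one_mul, abs_of_nonneg (by linarith)]
          have hfeas : |b'| ≤ M := by rw [hb'abs]; linarith
          have hdiff : b' - b = -(σ*θ) := by rw [hb'def]; linear_combination hbσ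
          have hψb' : psi l0 l2 M b' = 2*q*(|b| - θ) := by
            rw [psi_linear hl0 hl2 hcase b' (by rw [hb'abs]; linarith), hb'abs]
          have h := hopt b' hfeas
          have e1 : a*(b' - b) = -((a*σ)*θ) := by rw [hdiff]; ring
          have e2 : S/2*(b' - b)^2 = S/2*θ^2 := by
            rw [hdiff]; linear_combination (S/2*θ^2)*hσ2
          rw [hψb, hψb', e1, e2] at h
          have hmul : (a*σ)*θ ≤ (-(2*q) + S/2*θ)*θ := by nlinarith [h]
          exact (mul_le_mul_iff_of_pos_right hθ).mp hmul
        have Dplus : -(a*σ) ≤ 2*q := by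
          refine limit_le (by linarith : (0:ℝ) < t - |b|) (by linarith : (0:ℝ) ≤ S/2) ?_
          intro θ hθ hθ0
          set b' := σ*(|b| + θ) with hb'def
          have hb'abs : |b'| = |b| + θ := by
            rw [hb'def, abs_mul, hσabs, one_mul, abs_of_nonneg (by linarith)]
          have hfeas : |b'| ≤ M := by rw [hb'abs]; linarith
          have hdiff : b' - b = σ*θ := by rw [hb'def]; linear_combination hbσ
          have hψb' : psi l0 l2 M b' = 2*q*(|b| + θ) := by
            rw [psi_linear hl0 hl2 hcase b' (by rw [hb'abs]; linarith), hb'abs]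
          have h := hopt b' hfeas
          have e1 : a*(b' - b) = (a*σ)*θ := by rw [hdiff]; ring
          have e2 : S/2*(b' - b)^2 = S/2*θ^2 := by
            rw [hdiff]; linear_combination (S/2*θ^2)*hσ2
          rw [hψb, hψb', e1, e2] at h
          have hmul : (-(a*σ))*θ ≤ (2*q + S/2*θ)*θ := by nlinarith [h]
          exact (mul_le_mul_iff_of_pos_right hθ).mp hmul
        have haσ : a*σ = -(2*q) := le_antisymm Dminus (by linarith)
        have ha : a = -(2*q)*σ := by linear_combination σ*haσ - a*hσ2
        have ha2 : a^2 = 4*(l0*l2) := by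
          rw [ha]; linear_combination (4*q^2)*hσ2 + 4*hq2
        have hmax : max (a^2/(4*l2) - l0) 0 = 0 := by
          apply max_eq_right
          rw [sub_nonpos, div_le_iff₀ (by positivity : (0:ℝ) < 4*l2), ha2]
          exact le_of_eq (by ring)
        have hab : a*b = -(2*q* |b|) := by
          linear_combination b*ha + 2*q*σ*hbσ - 2*q* |b| * hσ2
        rw [hψb, hmax, hab]; ring
      · -- t ≤ |b| : quadratic region, a = -2 l2 b
        have hψb : psi l0 l2 M b = l2* |b|^2 + l0 := by
          rw [psi_quadratic hl0 hl2 hcase b hBt, sq_abs]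
        have Dminus : a*σ ≤ -(2*l2* |b|) := by
          refine limit_le hBpos hK ?_
          intro θ hθ hθ0
          set b' := σ*(|b| - θ) with hb'def
          have hb'abs : |b'| = |b| - θ := by
            rw [hb'def, abs_mul, hσabs, one_mul, abs_of_nonneg (by linarith)]
          have hfeas : |b'| ≤ M := by rw [hb'abs]; linarith
          have hdiff : b' - b = -(σ*θ) := by rw [hb'def]; linear_combination hbσ
          have hb'sq : b'^2 = (|b| - θ)^2 := by
            rw [hb'def]; linear_combination ((|b| - θ)^2)*hσ2
          have hub2 : psi l0 l2 M b' ≤ l2*(|b| - θ)^2 + l0 := by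
            have hub := psi_le_quad hl0 hl2 hcase b'
            rw [hb'sq] at hub; exact hub
          have h := hopt b' hfeas
          have e1 : a*(b' - b) = -((a*σ)*θ) := by rw [hdiff]; ring
          have e2 : S/2*(b' - b)^2 = S/2*θ^2 := by
            rw [hdiff]; linear_combination (S/2*θ^2)*hσ2
          rw [hψb, e1, e2] at h
          have hmul : (a*σ)*θ ≤ (-(2*l2* |b|) + (l2 + S/2)*θ)*θ := by
            nlinarith [h, hub2]
          exact (mul_le_mul_iff_of_pos_right hθ).mp hmul
        have Dplus : -(a*σ) ≤ 2*l2* |b| := by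
          refine limit_le (by linarith : (0:ℝ) < M - |b|) hK ?_
          intro θ hθ hθ0
          set b' := σ*(|b| + θ) with hb'def
          have hb'abs : |b'| = |b| + θ := by
            rw [hb'def, abs_mul, hσabs, one_mul, abs_of_nonneg (by linarith)]
          have hfeas : |b'| ≤ M := by rw [hb'abs]; linarith
          have hdiff : b' - b = σ*θ := by rw [hb'def]; linear_combination hbσ
          have hψb' : psi l0 l2 M b' = l2*(|b| + θ)^2 + l0 := by
            rw [psi_quadratic hl0 hl2 hcase b' (by rw [hb'abs]; linarith), hb'def]
            linear_combination (l2*(|b| + θ)^2)*hσ2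
          have h := hopt b' hfeas
          have e1 : a*(b' - b) = (a*σ)*θ := by rw [hdiff]; ring
          have e2 : S/2*(b' - b)^2 = S/2*θ^2 := by
            rw [hdiff]; linear_combination (S/2*θ^2)*hσ2
          rw [hψb, hψb', e1, e2] at h
          have hmul : (-(a*σ))*θ ≤ (2*l2* |b| + (l2 + S/2)*θ)*θ := by nlinarith [h]
          exact (mul_le_mul_iff_of_pos_right hθ).mp hmul
        have haσ : a*σ = -(2*l2* |b|) := le_antisymm Dminus (by linarith)
        have ha : a = -(2*l2)*b := by
          linear_combination σ*haσ - a*hσ2 - 2*l2*hbσ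
        have hl0b : l0 ≤ l2*b^2 := by
          nlinarith [hl0t, mul_self_le_mul_self htpos.le hBt, sq_abs b]
        have hmax : max (a^2/(4*l2) - l0) 0 = l2*b^2 - l0 := by
          have hdd : a^2/(4*l2) - l0 = l2*b^2 - l0 := by
            rw [ha]; field_simp; ring
          rw [hdd]
          exact max_eq_left (by linarith)
        rw [hψb, hmax, ha, sq_abs]; ring

end helpers

theorem dual_optimal_case_le
    (n p : ℕ) (X : Matrix (Fin n) (Fin p) ℝ) (y : Fin n → ℝ)
    (l0 l2 M : ℝ) (hl0 : 0 < l0) (hl2 : 0 < l2) (hM : 0 < M)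
    (hcase : Real.sqrt (l0 / l2) ≤ M)
    (βs : Fin p → ℝ) (hβs : ∀ i, |βs i| ≤ M)
    (hmin : ∀ β : Fin p → ℝ, (∀ i, |β i| ≤ M) → Fobj n p X y l0 l2 M βs ≤ Fobj n p X y l0 l2 M β)
    (αs : Fin n → ℝ) (hαs : αs = fun j => -(y j - ∑ i, X j i * βs i))
    (γs : Fin p → ℝ)
    (hγs : ∀ i, γs i =
      if |βs i| = M
      then (∑ j, αs j * X j i) - 2 * M * l2 * Real.sign (∑ j, αs j * X j i)
      else 0) :
    (∀ (α : Fin n → ℝ) (γ : Fin p → ℝ), h1 n p X y l0 l2 M α γ ≤ h1 n p X y l0 l2 M αs γs) ∧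
      h1 n p X y l0 l2 M αs γs = Fobj n p X y l0 l2 M βs := by
  classical
  -- the per-coordinate quadratic optimality condition
  have hopt : ∀ i : Fin p, ∀ b' : ℝ, |b'| ≤ M →
      psi l0 l2 M (βs i) ≤ psi l0 l2 M b' + (∑ j, αs j * X j i) * (b' - βs i)
        + (∑ j, (X j i)^2)/2 * (b' - βs i)^2 := by
    intro i b' hb'
    set u := Function.update βs i b' with hudef
    have hfeas : ∀ k, |u k| ≤ M := by
      intro k
      rcases eq_or_ne k i with rfl | hk
      · rw [hudef, Function.update_self]; exact hb'
      · rw [hudef, Function.update_of_ne hk]; exact hβs k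
    have hkey := hmin u hfeas
    unfold Fobj at hkey
    have hlin : ∀ j, ∑ k, X j k * u k = (∑ k, X j k * βs k) + X j i * (b' - βs i) := by
      intro j
      have h1 : ∑ k, (X j k * u k - X j k * βs k) = X j i * (b' - βs i) := by
        rw [Finset.sum_eq_single i]
        · rw [hudef, Function.update_self]; ring
        · intro k _ hk
          rw [hudef, Function.update_of_ne hk]; ring
        · exact fun h => absurd (Finset.mem_univ i) h
      rw [Finset.sum_sub_distrib] at h1
      linarith
    have hpsi : ∑ k, psi l0 l2 M (u k)
        = (∑ k, psi l0 l2 M (βs k)) + (psi l0 l2 M b' - psi l0 l2 M (βs i)) := by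
      have h1 : ∑ k, (psi l0 l2 M (u k) - psi l0 l2 M (βs k))
          = psi l0 l2 M b' - psi l0 l2 M (βs i) := by
        rw [Finset.sum_eq_single i]
        · rw [hudef, Function.update_self]
        · intro k _ hk; rw [hudef, Function.update_of_ne hk]; ring
        · exact fun h => absurd (Finset.mem_univ i) h
      rw [Finset.sum_sub_distrib] at h1
      linarith
    have hquad : ∑ j, (y j - ∑ k, X j k * u k)^2
        = ∑ j, (y j - ∑ k, X j k * βs k)^2
          - 2*(b' - βs i)*(∑ j, (y j - ∑ k, X j k * βs k) * X j i)
          + (b' - βs i)^2 * ∑ j, (X j i)^2 := by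
      have h1 : ∀ j, (y j - ∑ k, X j k * u k)^2
          = (y j - ∑ k, X j k * βs k)^2
            - 2*(b' - βs i)*((y j - ∑ k, X j k * βs k) * X j i)
            + (b' - βs i)^2 * (X j i)^2 := by
        intro j; rw [hlin j]; ring
      rw [Finset.sum_congr rfl fun j _ => h1 j, Finset.sum_add_distrib,
          Finset.sum_sub_distrib, ← Finset.mul_sum, ← Finset.mul_sum]
    have haR : (∑ j, αs j * X j i) = -∑ j, (y j - ∑ k, X j k * βs k) * X j i := by
      rw [hαs, ← Finset.sum_neg_distrib]
      exact Finset.sum_congr rfl fun j _ => by ring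
    rw [hquad, hpsi] at hkey
    rw [haR]
    linarith
  -- per-coordinate exact complementarity
  have hEQ : ∀ i, psi l0 l2 M (βs i) + (∑ j, αs j * X j i) * βs i
      + (max (((∑ j, αs j * X j i) - γs i)^2/(4*l2) - l0) 0 + M * |γs i|) = 0 := by
    intro i
    exact eq_coord hl0 hl2 hM hcase _ _ _ _
      (Finset.sum_nonneg fun j _ => sq_nonneg _) (hβs i) (hγs i) (hopt i)
  -- generic sum exchange
  have exch : ∀ w : Fin n → ℝ,
      ∑ i, (∑ j, w j * X j i) * βs i = ∑ j, w j * (∑ k, X j k * βs k) := by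
    intro w
    simp only [Finset.sum_mul, Finset.mul_sum]
    rw [Finset.sum_comm]
    exact Finset.sum_congr rfl fun j _ => Finset.sum_congr rfl fun i _ => by ring
  -- the equality part
  have hEq : h1 n p X y l0 l2 M αs γs = Fobj n p X y l0 l2 M βs := by
    have hsum0 : ∑ i, (psi l0 l2 M (βs i) + (∑ j, αs j * X j i) * βs i
        + (max (((∑ j, αs j * X j i) - γs i)^2/(4*l2) - l0) 0 + M * |γs i|)) = 0 :=
      Finset.sum_eq_zero fun i _ => hEQ i
    rw [Finset.sum_add_distrib, Finset.sum_add_distrib] at hsum0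
    have hswap := exch αs
    have hid : -(1/2)*∑ j, (αs j)^2 - ∑ j, αs j * y j
        = (1/2)*∑ j, (y j - ∑ k, X j k * βs k)^2
          - ∑ j, αs j * (∑ k, X j k * βs k) := by
      have l : -(1/2)*∑ j, (αs j)^2 - ∑ j, αs j * y j
          = ∑ j, (-(1/2)*(αs j)^2 - αs j * y j) := by
        rw [Finset.sum_sub_distrib, ← Finset.mul_sum]
      have r : (1/2)*∑ j, (y j - ∑ k, X j k * βs k)^2
            - ∑ j, αs j * (∑ k, X j k * βs k)
          = ∑ j, ((1/2)*(y j - ∑ k, X j k * βs k)^2 - αs j * (∑ k, X j k * βs k)) := by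
        rw [Finset.sum_sub_distrib, ← Finset.mul_sum]
      rw [l, r]
      exact Finset.sum_congr rfl fun j _ => by simp only [hαs]; ring
    unfold h1 Fobj vdual
    linarith [hsum0, hswap, hid]
  refine ⟨?_, hEq⟩
  intro α γ
  rw [hEq]
  have hwc : ∀ i, -((∑ j, α j * X j i) * βs i)
      - (max (((∑ j, α j * X j i) - γ i)^2/(4*l2) - l0) 0 + M * |γ i|)
      ≤ psi l0 l2 M (βs i) :=
    fun i => weak_coord hl0 hl2 hM hcase _ _ _ (hβs i)
  have hsum : ∑ i, (-((∑ j, α j * X j i) * βs i)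
      - (max (((∑ j, α j * X j i) - γ i)^2/(4*l2) - l0) 0 + M * |γ i|))
      ≤ ∑ i, psi l0 l2 M (βs i) := Finset.sum_le_sum fun i _ => hwc i
  have hsplit : ∑ i, (-((∑ j, α j * X j i) * βs i)
      - (max (((∑ j, α j * X j i) - γ i)^2/(4*l2) - l0) 0 + M * |γ i|))
      = -(∑ i, (∑ j, α j * X j i) * βs i)
        - ∑ i, (max (((∑ j, α j * X j i) - γ i)^2/(4*l2) - l0) 0 + M * |γ i|) := by
    rw [Finset.sum_sub_distrib, Finset.sum_neg_distrib]
  rw [hsplit] at hsum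
  have hswap2 := exch α
  have hKEY : (0:ℝ) ≤ (1/2)*∑ j, (α j + (y j - ∑ k, X j k * βs k))^2 := by positivity
  have hexp : ∑ j, (α j + (y j - ∑ k, X j k * βs k))^2
      = ∑ j, (α j)^2 + 2*(∑ j, α j * y j - ∑ j, α j * (∑ k, X j k * βs k))
        + ∑ j, (y j - ∑ k, X j k * βs k)^2 := by
    have h1 : ∀ j, (α j + (y j - ∑ k, X j k * βs k))^2
        = (α j)^2 + 2*(α j * y j - α j * (∑ k, X j k * βs k))
          + (y j - ∑ k, X j k * βs k)^2 := fun j => by ring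
    rw [Finset.sum_congr rfl fun j _ => h1 j, Finset.sum_add_distrib,
        Finset.sum_add_distrib, ← Finset.mul_sum, Finset.sum_sub_distrib]
  unfold h1 Fobj vdual
  linarith [hKEY, hexp, hsum, hswap2]
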